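/- Let F₂ = ⟨a, b⟩ be the free group of rank 2 and let φ be the automorphism of F₂ × ℤ = ⟨a, b⟩ × ⟨t⟩ determined by φ(a) = at, φ(b) = b, φ(t) = t (i.e. φ(w, n) = (w, σ_a(w) + n) where σ_a(w) is the exponent sum of a in w). Then the fixed subgroup Fix φ = {x ∈ F₂ × ℤ : φ(x) = x} is not finitely generated. -/

import Mathlib

/-- The fixed subgroup of an endomorphism of a group. -/
def fixedSubgroup {G : Type*} [Group G] (φ : G →* G) : Subgroup G where
  carrier := {g | φ g = g}
  one_mem' := map_one φ
  mul_mem' := by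
    intro a b ha hb
    simp only [Set.mem_setOf_eq, map_mul] at *
    rw [ha, hb]
  inv_mem' := by
    intro a ha
    simp only [Set.mem_setOf_eq, map_inv] at *
    rw [ha]

/-- The exponent-sum-of-`a` homomorphism `F₂ → ℤ`, sending `a ↦ 1`, `b ↦ 0`. -/
noncomputable def expSumA : FreeGroup (Fin 2) →* Multiplicative ℤ :=
  FreeGroup.lift (fun i => if i = 0 then Multiplicative.ofAdd (1 : ℤ) else 1)

open SemidirectProduct Multiplicative

noncomputable section Aux

def shiftHom : Multiplicative ℤ →* MulAut (Multiplicative (ℤ →₀ ℤ)) :=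
  MonoidHom.mk' (fun n => AddEquiv.toMultiplicative (Finsupp.domCongr (Equiv.addLeft n.toAdd)))
    (by
      intro m n
      have key : Equiv.addLeft ((m*n).toAdd) =
          (Equiv.addLeft n.toAdd).trans (Equiv.addLeft m.toAdd) := by
        ext z; simp [add_assoc]
      ext x : 1
      show (Finsupp.domCongr (Equiv.addLeft (m * n).toAdd) x.toAdd : ℤ →₀ ℤ)
        = Finsupp.domCongr (Equiv.addLeft m.toAdd) (Finsupp.domCongr (Equiv.addLeft n.toAdd) x.toAdd)
      simp only [Finsupp.domCongr_apply, key, ← Finsupp.equivMapDomain_trans])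

abbrev HH := Multiplicative (ℤ →₀ ℤ) ⋊[shiftHom] Multiplicative ℤ

noncomputable def ff : FreeGroup (Fin 2) →* HH :=
  FreeGroup.lift (fun i => if i = 0 then inr (ofAdd (1 : ℤ))
    else inl (ofAdd (Finsupp.single (0 : ℤ) (1 : ℤ))))

lemma rightHom_ff : (rightHom : HH →* Multiplicative ℤ).comp ff = expSumA := by
  apply FreeGroup.ext_hom
  intro i
  fin_cases i <;> simp [ff, expSumA, rightHom]

lemma ff_right (w : FreeGroup (Fin 2)) (hw : w ∈ expSumA.ker) : (ff w).right = 1 := by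
  have := congrArg (fun g => g w) rightHom_ff
  simpa [MonoidHom.mem_ker.mp hw, rightHom] using this

/-- The key homomorphism from the kernel to the lamplighter fiber. -/
noncomputable def ψ : expSumA.ker →* Multiplicative (ℤ →₀ ℤ) where
  toFun x := (ff x).left
  map_one' := by simp
  map_mul' x y := by
    have : (ff x).right = 1 := ff_right x x.2
    simp [mul_left, this]

lemma shift_apply (n : ℤ) :
    shiftHom (ofAdd n) (ofAdd (Finsupp.single (0:ℤ) (1:ℤ))) = ofAdd (Finsupp.single n 1) := by
  show AddEquiv.toMultiplicative (Finsupp.domCongr (Equiv.addLeft ((ofAdd n).toAdd)))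
      (ofAdd (Finsupp.single (0:ℤ) (1:ℤ))) = ofAdd (Finsupp.single n 1)
  have : (Finsupp.domCongr (Equiv.addLeft n) (Finsupp.single (0:ℤ) (1:ℤ)) : ℤ →₀ ℤ)
      = Finsupp.single n 1 := by
    rw [Finsupp.domCongr_apply, Finsupp.equivMapDomain_single]
    simp
  exact congrArg ofAdd this

lemma wn_mem (n : ℤ) :
    (FreeGroup.of (0 : Fin 2))^n * FreeGroup.of 1 * (FreeGroup.of (0:Fin 2))^(-n) ∈ expSumA.ker := by
  simp [MonoidHom.mem_ker, expSumA, mul_assoc, ← zpow_add]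

lemma ψ_wn (n : ℤ) : ψ ⟨_, wn_mem n⟩ = ofAdd (Finsupp.single n 1) := by
  show (ff ((FreeGroup.of (0 : Fin 2))^n * FreeGroup.of 1 * (FreeGroup.of (0:Fin 2))^(-n))).left
    = ofAdd (Finsupp.single n 1)
  have h0 : ff (FreeGroup.of (0 : Fin 2)) = inr (ofAdd (1:ℤ)) := by simp [ff]
  have h1 : ff (FreeGroup.of (1 : Fin 2)) = inl (ofAdd (Finsupp.single (0:ℤ) (1:ℤ))) := by
    simp [ff]
  have h0n : ∀ m : ℤ, ff ((FreeGroup.of (0:Fin 2))^m) = inr (ofAdd m) := by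
    intro m
    rw [map_zpow, h0, ← map_zpow]
    congr 1
    rw [← ofAdd_zsmul]
    norm_num
  have : ff ((FreeGroup.of (0 : Fin 2))^n * FreeGroup.of 1 * (FreeGroup.of (0:Fin 2))^(-n))
      = inl (shiftHom (ofAdd n) (ofAdd (Finsupp.single (0:ℤ) (1:ℤ)))) := by
    rw [map_mul, map_mul, h0n, h0n, h1, inl_aut]
    congr 1
  rw [this, shift_apply, left_inl]

lemma psi_surjective : Function.Surjective ψ := by
  have hrange : ∀ n : ℤ, ofAdd (Finsupp.single n (1:ℤ)) ∈ ψ.range := fun n =>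
    ⟨⟨_, wn_mem n⟩, ψ_wn n⟩
  intro x
  have key : ∀ g : ℤ →₀ ℤ, ofAdd g ∈ ψ.range := by
    intro g
    induction g using Finsupp.induction with
    | zero => exact ψ.range.one_mem
    | single_add a b f _ _ ih =>
        have hs : ofAdd (Finsupp.single a b) ∈ ψ.range := by
          have := ψ.range.zpow_mem (hrange a) b
          rwa [← ofAdd_zsmul, Finsupp.smul_single, smul_eq_mul, mul_one] at this
        have := ψ.range.mul_mem hs ih
        rwa [← ofAdd_add] at this
  exact key x.toAdd

lemma finsupp_int_not_fg : ¬ AddGroup.FG (ℤ →₀ ℤ) := by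
  intro h
  obtain ⟨S, hS⟩ := h.out
  obtain ⟨m, hm⟩ := Infinite.exists_notMem_finset (S.sup fun f => f.support)
  set P : AddSubgroup (ℤ →₀ ℤ) := (Finsupp.applyAddHom (M := ℤ) m).ker with hP
  have hle : AddSubgroup.closure (↑S) ≤ P := by
    rw [AddSubgroup.closure_le]
    intro f hf
    have : m ∉ f.support := fun hmem => hm (Finset.mem_sup.mpr ⟨f, hf, hmem⟩)
    simpa [hP, AddMonoidHom.mem_ker, Finsupp.applyAddHom] using
      Finsupp.notMem_support_iff.mp this
  have hmem : Finsupp.single m (1:ℤ) ∈ P := by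
    apply hle
    rw [hS]
    trivial
  have : (Finsupp.single m (1:ℤ)) m = 0 := by
    simp only [hP, AddMonoidHom.mem_ker, Finsupp.applyAddHom_apply] at hmem
    exact hmem
  simp at this

end Aux

/-- The automorphism `φ` of `F₂ × ℤ` with `φ(a) = at`, `φ(b) = b`, `φ(t) = t`,
i.e. `φ(w, n) = (w, σ_a(w) + n)`, has non-finitely-generated fixed subgroup. -/
theorem fix_not_fg_of_expSum_aut
    (φ : (FreeGroup (Fin 2) × Multiplicative ℤ) ≃* (FreeGroup (Fin 2) × Multiplicative ℤ))
    (hφ : ∀ (w : FreeGroup (Fin 2)) (n : Multiplicative ℤ), φ (w, n) = (w, expSumA w * n)) :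
    ¬ (fixedSubgroup φ.toMonoidHom).FG := by
  intro hFG
  have hmap : (fixedSubgroup φ.toMonoidHom).map
      (MonoidHom.fst (FreeGroup (Fin 2)) (Multiplicative ℤ)) = expSumA.ker := by
    ext w
    simp only [Subgroup.mem_map, MonoidHom.mem_ker]
    constructor
    · rintro ⟨⟨v, n⟩, hv, rfl⟩
      have hv' : φ (v, n) = (v, n) := hv
      rw [hφ] at hv'
      have := (Prod.ext_iff.mp hv').2
      simpa using mul_right_cancel (this.trans (one_mul n).symm)
    · intro hw
      refine ⟨(w, 1), ?_, rfl⟩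
      show φ (w, 1) = (w, 1)
      rw [hφ, hw, one_mul]
  have hK : (expSumA.ker).FG := by
    obtain ⟨S, hS⟩ := hFG
    rw [← hmap, ← hS, MonoidHom.map_closure]
    exact ⟨S.image _, by rw [Finset.coe_image]⟩
  haveI : Group.FG (expSumA.ker) := (Group.fg_iff_subgroup_fg _).mpr hK
  have : Group.FG (Multiplicative (ℤ →₀ ℤ)) := Group.fg_of_surjective psi_surjective
  exact finsupp_int_not_fg (AddGroup.fg_iff_mul_fg.mpr this)
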